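/- With d̄ and d_d as in the deletion-distance construction, for any two elections E = (V,O), E' = (V',O') over the same candidate set whose profiles agree on V ∩ V': d_d(E,E') < 2 if V ⊆ V' or V' ⊆ V, and d_d(E,E') > 2 otherwise. -/

import Mathlib

open scoped ENNReal

/-- An election over candidate set `C`: a finite set of voters (drawn from ℕ) together
with a strict total order on `C` for each voter. -/
def Election (C : Type*) : Type _ :=
  Σ V : Finset ℕ, ({i : ℕ // i ∈ V} → {r : C → C → Prop // IsStrictTotalOrder C r})

/-- The profiles of two elections agree on the common voters. -/
def Agrees {C : Type*} (E E' : Election C) : Prop :=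
  ∀ (i : ℕ) (h : i ∈ E.1) (h' : i ∈ E'.1), E.2 ⟨i, h⟩ = E'.2 ⟨i, h'⟩

open Classical in
/-- The auxiliary function `d̄`: `0` on equal elections, `2 - 1/(k + M² + 1)` when one
voter set strictly contains the other and the profiles agree on the intersection
(with `k` the difference in sizes and `M` the larger size), and `+∞` otherwise. -/
noncomputable def dbar {C : Type*} (E E' : Election C) : ℝ≥0∞ :=
  if E = E' then 0
  else if Agrees E E' ∧ (E.1 ⊂ E'.1 ∨ E'.1 ⊂ E.1) then
    (2 : ℝ≥0∞) -
      1 / (((max E.1.card E'.1.card - min E.1.card E'.1.card : ℕ) : ℝ≥0∞) +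
            ((max E.1.card E'.1.card : ℕ) : ℝ≥0∞) ^ 2 + 1)
  else ⊤

/-- The weight of a chain `x :: l ++ [y]` of elections. -/
noncomputable def chainSum {α : Type*} (w : α → α → ℝ≥0∞) : α → List α → α → ℝ≥0∞
  | x, [], y => w x y
  | x, z :: l, y => w x z + chainSum w z l y

/-- The shortest-path distance induced by the edge-weight function `w`. -/
noncomputable def spDist {α : Type*} (w : α → α → ℝ≥0∞) (x y : α) : ℝ≥0∞ :=
  ⨅ l : List α, chainSum w x l y

lemma eq_of_agrees {C : Type*} (E E' : Election C) (h : E.1 = E'.1) (ha : Agrees E E') :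
    E = E' := by
  obtain ⟨V, f⟩ := E; obtain ⟨V', f'⟩ := E'
  cases h
  congr 1
  funext i
  exact ha i.1 i.2 i.2

lemma dbar_self {C : Type*} (E : Election C) : dbar E E = 0 := by simp [dbar]

lemma dbar_ge {C : Type*} (a b : Election C) (h : a ≠ b) : (3/2 : ℝ≥0∞) ≤ dbar a b := by
  unfold dbar
  rw [if_neg h]
  split_ifs with hc
  · obtain ⟨hag, hsub⟩ := hc
    set M : ℕ := max a.1.card b.1.card with hM
    have hM1 : 1 ≤ M := by
      rcases hsub with hs | hs
      · have := Finset.card_lt_card hs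
        omega
      · have := Finset.card_lt_card hs
        omega
    have hden : (2 : ℝ≥0∞) ≤ ((M - min a.1.card b.1.card : ℕ) : ℝ≥0∞) + ((M : ℕ) : ℝ≥0∞) ^ 2 + 1 := by
      have : (1 : ℝ≥0∞) ≤ ((M : ℕ) : ℝ≥0∞) ^ 2 := by
        have : (1 : ℝ≥0∞) ≤ (M : ℝ≥0∞) := by exact_mod_cast hM1
        calc (1:ℝ≥0∞) = 1^2 := by norm_num
        _ ≤ (M : ℝ≥0∞)^2 := by gcongr
      calc (2:ℝ≥0∞) = 0 + 1 + 1 := by norm_num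
      _ ≤ _ := by gcongr; exact zero_le
    have h1 : 1 / (((M - min a.1.card b.1.card : ℕ) : ℝ≥0∞) + ((M : ℕ) : ℝ≥0∞) ^ 2 + 1) ≤ 1/2 := by
      exact ENNReal.div_le_div_left hden 1
    refine ENNReal.le_sub_of_add_le_left ?_ ?_
    · exact ne_of_lt (lt_of_le_of_lt (by exact ENNReal.div_le_div_left hden 1) (by norm_num))
    calc 1 / (((M - min a.1.card b.1.card : ℕ) : ℝ≥0∞) + ((M : ℕ) : ℝ≥0∞) ^ 2 + 1) + 3/2
        ≤ 1/2 + 3/2 := by gcongr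
      _ = 2 := by
          rw [ENNReal.div_add_div_same, eq_comm,
            ENNReal.eq_div_iff (by norm_num) (by norm_num)]
          norm_num
  · exact le_top


lemma chain_ge {C : Type*} (l : List (Election C)) :
    ∀ x y : Election C, min (dbar x y) 3 ≤ chainSum dbar x l y := by
  induction l with
  | nil => intro x y; simpa [chainSum] using min_le_left (dbar x y) 3
  | cons z l ih =>
    intro x y
    show min (dbar x y) 3 ≤ dbar x z + chainSum dbar z l y
    by_cases hxz : x = z
    · subst hxz
      rw [dbar_self, zero_add]
      exact ih x y
    · by_cases hzy : z = y
      · subst hzy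
        exact le_trans (min_le_left _ _) le_self_add
      · have h1 := dbar_ge x z hxz
        have h2 : (3/2 : ℝ≥0∞) ≤ chainSum dbar z l y :=
          le_trans (le_min (dbar_ge z y hzy) (ENNReal.half_le_self)) (ih z y)
        refine le_trans (min_le_right _ _) ?_
        calc (3:ℝ≥0∞) = 3/2 + 3/2 := (ENNReal.add_halves 3).symm
        _ ≤ _ := add_le_add h1 h2

/-- for any two elections over the same candidate set whose profiles
agree on the common voters, `d_d(E, E') < 2` if one voter set contains the other, and
`d_d(E, E') > 2` otherwise. -/
theorem stmt13 {C : Type*} [Fintype C] (E E' : Election C) (hagree : Agrees E E') :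
    (E.1 ⊆ E'.1 ∨ E'.1 ⊆ E.1 → spDist (dbar (C := C)) E E' < 2) ∧
    (¬ (E.1 ⊆ E'.1 ∨ E'.1 ⊆ E.1) → 2 < spDist (dbar (C := C)) E E') := by
  constructor
  · intro hsub
    have hle : spDist (dbar (C := C)) E E' ≤ dbar E E' := iInf_le _ ([] : List (Election C))
    refine lt_of_le_of_lt hle ?_
    by_cases heq : E = E'
    · simp [heq, dbar_self]
    · have hne : E.1 ≠ E'.1 := fun h => heq (eq_of_agrees E E' h hagree)
      have hstrict : E.1 ⊂ E'.1 ∨ E'.1 ⊂ E.1 := by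
        rcases hsub with h | h
        · exact Or.inl (ssubset_of_ne_of_subset hne h)
        · exact Or.inr (ssubset_of_ne_of_subset (Ne.symm hne) h)
      unfold dbar
      rw [if_neg heq, if_pos ⟨hagree, hstrict⟩]
      refine ENNReal.sub_lt_self (by norm_num) (by norm_num) ?_
      have : (((max E.1.card E'.1.card - min E.1.card E'.1.card : ℕ) : ℝ≥0∞) +
          ((max E.1.card E'.1.card : ℕ) : ℝ≥0∞) ^ 2 + 1) ≠ ⊤ := by
        simp [ENNReal.pow_eq_top_iff]
      simp [ENNReal.div_eq_zero_iff, this]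
  · intro hn
    have hne : E ≠ E' := by
      rintro rfl
      exact hn (Or.inl (subset_refl _))
    have htop : dbar E E' = ⊤ := by
      unfold dbar
      rw [if_neg hne, if_neg]
      rintro ⟨-, h | h⟩
      · exact hn (Or.inl h.subset)
      · exact hn (Or.inr h.subset)
    have h3 : (3 : ℝ≥0∞) ≤ spDist (dbar (C := C)) E E' := by
      refine le_iInf fun l => ?_
      have := chain_ge l E E'
      rwa [htop, min_eq_right (le_top)] at this
    exact lt_of_lt_of_le (by norm_num) h3
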